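/- Let I be a nonempty open real interval, let f : I → ℝ be a twice differentiable function on I with nonvanishing first derivative, and let p = (p₁,p₂) : I → ℝ₊² be differentiable on I. Then the second-order mixed partial derivative ∂₁∂₂A_{f,p} exists at every diagonal point (x,x) with x ∈ I, and ∂₁∂₂A_{f,p}(x,x) = −(p₁p₂/p₀²)(x)·((p₁p₂)'/(p₁p₂) + f''/f')(x), where p₀ := p₁ + p₂. -/

import Mathlib

open Set
open Filter Function
open scoped Topology


lemma injOn_of_deriv_ne_zero {I : Set ℝ} (hIopen : IsOpen I) (hIconn : I.OrdConnected)
    {f : ℝ → ℝ} (hf1 : ∀ x ∈ I, DifferentiableAt ℝ f x)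
    (hf2 : ∀ x ∈ I, DifferentiableAt ℝ (deriv f) x)
    (hf' : ∀ x ∈ I, deriv f x ≠ 0) : Set.InjOn f I := by
  have hconv : Convex ℝ I := hIconn.convex
  have hcf : ContinuousOn f I := fun z hz => (hf1 z hz).continuousAt.continuousWithinAt
  have hcd : ContinuousOn (deriv f) I := fun z hz => (hf2 z hz).continuousAt.continuousWithinAt
  have key : ∀ a ∈ I, ∀ b ∈ I, 0 < deriv f a → 0 < deriv f b ∨ False := by
    intro a ha b hb hda
    left
    rcases lt_or_gt_of_ne (hf' b hb) with h | h
    · exfalso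
      have h0 : (0:ℝ) ∈ Icc (deriv f b) (deriv f a) := ⟨le_of_lt h, le_of_lt hda⟩
      have := hIconn.isPreconnected.intermediate_value hb ha hcd h0
      obtain ⟨z, hz, hz0⟩ := this
      exact hf' z hz hz0
    · exact h
  by_cases hpos : ∃ a ∈ I, 0 < deriv f a
  · obtain ⟨a, ha, hda⟩ := hpos
    have hmono : StrictMonoOn f I := by
      apply strictMonoOn_of_deriv_pos hconv hcf
      intro z hz
      rw [hIopen.interior_eq] at hz
      rcases key a ha z hz hda with h | h
      exacts [h, h.elim]
    exact hmono.injOn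
  · push_neg at hpos
    have hanti : StrictAntiOn f I := by
      apply strictAntiOn_of_deriv_neg hconv hcf
      intro z hz
      rw [hIopen.interior_eq] at hz
      exact lt_of_le_of_ne (hpos z hz) (hf' z hz)
    exact hanti.injOn

lemma hasDerivAt_invFunOn {I : Set ℝ} (hIopen : IsOpen I)
    {f : ℝ → ℝ} (hinj : Set.InjOn f I)
    (hf1 : ∀ x ∈ I, DifferentiableAt ℝ f x)
    (hf2 : ∀ x ∈ I, DifferentiableAt ℝ (deriv f) x)
    (hf' : ∀ x ∈ I, deriv f x ≠ 0)
    {z : ℝ} (hz : z ∈ I) :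
    HasDerivAt (Function.invFunOn f I) (deriv f z)⁻¹ (f z) := by
  have hstrict : HasStrictDerivAt f (deriv f z) z := by
    apply hasStrictDerivAt_of_hasDerivAt_of_continuousAt
    · filter_upwards [hIopen.mem_nhds hz] with y hy using (hf1 y hy).hasDerivAt
    · exact (hf2 z hz).continuousAt
  have hne := hf' z hz
  have hgd : HasStrictDerivAt (hstrict.localInverse f _ z hne) (deriv f z)⁻¹ (f z) :=
    hstrict.to_localInverse hne
  have hF := hstrict.hasStrictFDerivAt_equiv hne
  have h1 : ∀ᶠ y in 𝓝 (f z), f (hstrict.localInverse f _ z hne y) = y :=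
    hF.eventually_right_inverse
  have h2 : Tendsto (hstrict.localInverse f _ z hne) (𝓝 (f z)) (𝓝 z) :=
    hF.localInverse_tendsto
  have hmemI : ∀ᶠ y in 𝓝 (f z), hstrict.localInverse f _ z hne y ∈ I :=
    h2.eventually_mem (hIopen.mem_nhds hz)
  have hev : Function.invFunOn f I =ᶠ[𝓝 (f z)] hstrict.localInverse f _ z hne := by
    filter_upwards [h1, hmemI] with y hy1 hy2
    calc Function.invFunOn f I y = Function.invFunOn f I (f (hstrict.localInverse f _ z hne y)) :=
          by rw [hy1]
      _ = hstrict.localInverse f _ z hne y := hinj.leftInvOn_invFunOn hy2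
  exact hgd.hasDerivAt.congr_of_eventuallyEq hev

/-- The 2-variable generalized Bajraktarević mean
`A_{f,p}(x,y) = f⁻¹((p₁(x)f(x)+p₂(y)f(y))/(p₁(x)+p₂(y)))`,
where the inverse of `f` is taken on the interval `I`. -/
noncomputable def bajMean (I : Set ℝ) (f p₁ p₂ : ℝ → ℝ) (x y : ℝ) : ℝ :=
  Function.invFunOn f I ((p₁ x * f x + p₂ y * f y) / (p₁ x + p₂ y))

theorem stmt6 (I : Set ℝ) (hIopen : IsOpen I) (hIne : I.Nonempty) (hIconn : I.OrdConnected)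
    (f p₁ p₂ : ℝ → ℝ)
    (hf1 : ∀ x ∈ I, DifferentiableAt ℝ f x)
    (hf2 : ∀ x ∈ I, DifferentiableAt ℝ (deriv f) x)
    (hf' : ∀ x ∈ I, deriv f x ≠ 0)
    (hp : ∀ x ∈ I, 0 < p₁ x ∧ 0 < p₂ x)
    (hp1d : ∀ x ∈ I, DifferentiableAt ℝ p₁ x)
    (hp2d : ∀ x ∈ I, DifferentiableAt ℝ p₂ x) :
    -- `∂₁∂₂ A_{f,p}` exists at every diagonal point `(x,x)` and has the stated value:
    -- the function `t ↦ ∂₂ A_{f,p}(t,x)` has, at `t = x`, the derivative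
    -- `-(p₁p₂/p₀²)(x) ((p₁p₂)'/(p₁p₂) + f''/f')(x)`.
    ∀ x ∈ I, HasDerivAt
      (fun t => deriv (fun s => bajMean I f p₁ p₂ t s) x)
      (-(p₁ x * p₂ x / (p₁ x + p₂ x) ^ 2) *
        (deriv (fun t => p₁ t * p₂ t) x / (p₁ x * p₂ x) +
          deriv (deriv f) x / deriv f x)) x := by
  intro x hx
  obtain ⟨hP1, hP2⟩ := hp x hx
  have hinj := injOn_of_deriv_ne_zero hIopen hIconn hf1 hf2 hf'
  have hcf : ContinuousOn f I := fun z hz => (hf1 z hz).continuousAt.continuousWithinAt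
  have himg : (f '' I).OrdConnected := (hIconn.isPreconnected.image f hcf).ordConnected
  -- membership of the weighted mean in `f '' I`
  have gmem : ∀ t ∈ I, (p₁ t * f t + p₂ x * f x) / (p₁ t + p₂ x) ∈ f '' I := by
    intro t ht
    have h1 : 0 < p₁ t := (hp t ht).1
    have hq : 0 < p₁ t + p₂ x := by linarith
    apply himg.uIcc_subset ⟨t, ht, rfl⟩ ⟨x, hx, rfl⟩
    rw [Set.mem_uIcc]
    rcases le_total (f t) (f x) with h | h
    · left
      constructor
      · rw [le_div_iff₀ hq]; nlinarith
      · rw [div_le_iff₀ hq]; nlinarith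
    · right
      constructor
      · rw [le_div_iff₀ hq]; nlinarith
      · rw [div_le_iff₀ hq]; nlinarith
  have hψmem : ∀ t ∈ I, Function.invFunOn f I ((p₁ t * f t + p₂ x * f x) / (p₁ t + p₂ x)) ∈ I := by
    intro t ht
    obtain ⟨a, ha, hfa⟩ := gmem t ht
    exact Function.invFunOn_mem ⟨a, ha, hfa⟩
  have hψeq : ∀ t ∈ I, f (Function.invFunOn f I ((p₁ t * f t + p₂ x * f x) / (p₁ t + p₂ x)))
      = (p₁ t * f t + p₂ x * f x) / (p₁ t + p₂ x) := by
    intro t ht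
    obtain ⟨a, ha, hfa⟩ := gmem t ht
    exact Function.invFunOn_eq ⟨a, ha, hfa⟩
  -- Step 2: explicit formula for the partial derivative in the second variable
  have key : ∀ t ∈ I, deriv (fun s => bajMean I f p₁ p₂ t s) x
      = (deriv f (Function.invFunOn f I ((p₁ t * f t + p₂ x * f x) / (p₁ t + p₂ x))))⁻¹ *
        (((deriv p₂ x * f x + p₂ x * deriv f x) * (p₁ t + p₂ x)
          - (p₁ t * f t + p₂ x * f x) * deriv p₂ x) / (p₁ t + p₂ x) ^ 2) := by
    intro t ht
    have h1 : 0 < p₁ t := (hp t ht).1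
    have hq : 0 < p₁ t + p₂ x := by linarith
    have hnum : HasDerivAt (fun s => p₁ t * f t + p₂ s * f s)
        (deriv p₂ x * f x + p₂ x * deriv f x) x := by
      simpa using (((hp2d x hx).hasDerivAt.mul (hf1 x hx).hasDerivAt)).const_add (p₁ t * f t)
    have hden : HasDerivAt (fun s => p₁ t + p₂ s) (deriv p₂ x) x :=
      (hp2d x hx).hasDerivAt.const_add (p₁ t)
    have hginner : HasDerivAt (fun s => (p₁ t * f t + p₂ s * f s) / (p₁ t + p₂ s))
        (((deriv p₂ x * f x + p₂ x * deriv f x) * (p₁ t + p₂ x)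
          - (p₁ t * f t + p₂ x * f x) * deriv p₂ x) / (p₁ t + p₂ x) ^ 2) x :=
      hnum.div hden (ne_of_gt hq)
    have houter : HasDerivAt (Function.invFunOn f I)
        (deriv f (Function.invFunOn f I ((p₁ t * f t + p₂ x * f x) / (p₁ t + p₂ x))))⁻¹
        ((p₁ t * f t + p₂ x * f x) / (p₁ t + p₂ x)) := by
      have := hasDerivAt_invFunOn hIopen hinj hf1 hf2 hf' (hψmem t ht)
      rwa [hψeq t ht] at this
    have hcomp := houter.comp x hginner
    rw [show (fun s => bajMean I f p₁ p₂ t s)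
        = (Function.invFunOn f I ∘ fun s => (p₁ t * f t + p₂ s * f s) / (p₁ t + p₂ s)) from rfl]
    exact hcomp.deriv
  -- Step 3: differentiate the formula in t at x
  have hgx : (p₁ x * f x + p₂ x * f x) / (p₁ x + p₂ x) = f x := by
    rw [div_eq_iff (by linarith : p₁ x + p₂ x ≠ 0)]; ring
  have hψx : Function.invFunOn f I ((p₁ x * f x + p₂ x * f x) / (p₁ x + p₂ x)) = x := by
    rw [hgx]; exact hinj.leftInvOn_invFunOn hx
  have hP0ne : p₁ x + p₂ x ≠ 0 := by linarith
  have hnum1 : HasDerivAt (fun t => p₁ t * f t + p₂ x * f x)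
      (deriv p₁ x * f x + p₁ x * deriv f x) x :=
    ((hp1d x hx).hasDerivAt.mul (hf1 x hx).hasDerivAt).add_const _
  have hden1 : HasDerivAt (fun t => p₁ t + p₂ x) (deriv p₁ x) x :=
    (hp1d x hx).hasDerivAt.add_const _
  have hg1 : HasDerivAt (fun t => (p₁ t * f t + p₂ x * f x) / (p₁ t + p₂ x))
      (((deriv p₁ x * f x + p₁ x * deriv f x) * (p₁ x + p₂ x)
        - (p₁ x * f x + p₂ x * f x) * deriv p₁ x) / (p₁ x + p₂ x) ^ 2) x :=
    hnum1.div hden1 hP0ne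
  have houter0 : HasDerivAt (Function.invFunOn f I) (deriv f x)⁻¹
      ((p₁ x * f x + p₂ x * f x) / (p₁ x + p₂ x)) := by
    rw [hgx]; exact hasDerivAt_invFunOn hIopen hinj hf1 hf2 hf' hx
  have hψ : HasDerivAt
      (fun t => Function.invFunOn f I ((p₁ t * f t + p₂ x * f x) / (p₁ t + p₂ x)))
      ((deriv f x)⁻¹ * (((deriv p₁ x * f x + p₁ x * deriv f x) * (p₁ x + p₂ x)
        - (p₁ x * f x + p₂ x * f x) * deriv p₁ x) / (p₁ x + p₂ x) ^ 2)) x :=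
    houter0.comp (h := fun t => (p₁ t * f t + p₂ x * f x) / (p₁ t + p₂ x)) x hg1
  have hdf2 : HasDerivAt (deriv f) (deriv (deriv f) x)
      (Function.invFunOn f I ((p₁ x * f x + p₂ x * f x) / (p₁ x + p₂ x))) := by
    rw [hψx]; exact (hf2 x hx).hasDerivAt
  have hdfψ : HasDerivAt
      (fun t => deriv f (Function.invFunOn f I ((p₁ t * f t + p₂ x * f x) / (p₁ t + p₂ x))))
      (deriv (deriv f) x * ((deriv f x)⁻¹ * (((deriv p₁ x * f x + p₁ x * deriv f x) * (p₁ x + p₂ x)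
        - (p₁ x * f x + p₂ x * f x) * deriv p₁ x) / (p₁ x + p₂ x) ^ 2))) x :=
    hdf2.comp (h := fun t => Function.invFunOn f I ((p₁ t * f t + p₂ x * f x) / (p₁ t + p₂ x))) x hψ
  have hne0 : deriv f (Function.invFunOn f I ((p₁ x * f x + p₂ x * f x) / (p₁ x + p₂ x))) ≠ 0 := by
    rw [hψx]; exact hf' x hx
  have hinv := hdfψ.inv hne0
  simp only [hψx] at hinv
  have hA : HasDerivAt (fun t => (deriv p₂ x * f x + p₂ x * deriv f x) * (p₁ t + p₂ x))
      ((deriv p₂ x * f x + p₂ x * deriv f x) * deriv p₁ x) x :=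
    hden1.const_mul _
  have hB : HasDerivAt (fun t => (p₁ t * f t + p₂ x * f x) * deriv p₂ x)
      ((deriv p₁ x * f x + p₁ x * deriv f x) * deriv p₂ x) x :=
    hnum1.mul_const _
  have hNt := hA.sub hB
  have hDt := hden1.pow 2
  have hG2 := hNt.div hDt (pow_ne_zero 2 hP0ne)
  have hH := hinv.mul hG2
  simp only [Pi.inv_apply, Pi.mul_apply, Pi.div_apply, Pi.sub_apply, Pi.pow_apply, hψx] at hH
  have heq : (fun t => deriv (fun s => bajMean I f p₁ p₂ t s) x) =ᶠ[𝓝 x]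
      (fun t => (deriv f (Function.invFunOn f I ((p₁ t * f t + p₂ x * f x) / (p₁ t + p₂ x))))⁻¹ *
        (((deriv p₂ x * f x + p₂ x * deriv f x) * (p₁ t + p₂ x)
          - (p₁ t * f t + p₂ x * f x) * deriv p₂ x) / (p₁ t + p₂ x) ^ 2)) := by
    filter_upwards [hIopen.mem_nhds hx] with t ht using key t ht
  have hfinal := hH.congr_of_eventuallyEq heq
  have hmulp : deriv (fun t => p₁ t * p₂ t) x = deriv p₁ x * p₂ x + p₁ x * deriv p₂ x :=
    ((hp1d x hx).hasDerivAt.mul (hp2d x hx).hasDerivAt).deriv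
  refine hfinal.congr_deriv ?_
  rw [hmulp]
  have hF' := hf' x hx
  have hP1ne : p₁ x ≠ 0 := ne_of_gt hP1
  have hP2ne : p₂ x ≠ 0 := ne_of_gt hP2
  field_simp
  ring
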